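/- Let C : [0,1]² → [0,1] be a bivariate copula whose first-order partial derivatives C_u = ∂C/∂u and C_v = ∂C/∂v exist and are bounded on (0,1)². Let φ : [0,1] → [0,1] be an increasing differentiable bijection with bounded derivative φ'. Let k : ℝ² → ℝ be a bounded nonnegative function supported on [-1,1]² with ∫∫_{[-1,1]²} k(s,t) ds dt = 1, and let K(x,y) = ∫_{-∞}^{x} ∫_{-∞}^{y} k(s,t) ds dt (so K takes values in [0,1]). Let (U,V) be a random vector on [0,1]² whose joint distribution function is C. Then there exists a constant C₀ > 0, depending only on ‖C_u‖, ‖C_v‖, ‖φ'‖ and ‖k‖, such that for all u, v ∈ (0,1) and all h ∈ (0,1) such that φ⁻¹(u) − sh ∈ [0,1] and φ⁻¹(v) − th ∈ [0,1] for all (s,t) ∈ [-1,1]², E[ ( K( (φ⁻¹(u) − φ⁻¹(U))/h , (φ⁻¹(v) − φ⁻¹(V))/h ) − 1{U ≤ u, V ≤ v} )² ] ≤ C₀ h. -/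

import Mathlib

open MeasureTheory Set

noncomputable section


-- inner integral vanishes when s is outside [-1,1]
lemma aux_inner_zero (k : ℝ → ℝ → ℝ)
    (hksupp : ∀ s t : ℝ, (s, t) ∉ Icc (-1:ℝ) 1 ×ˢ Icc (-1:ℝ) 1 → k s t = 0)
    {s : ℝ} (hs : s ∉ Icc (-1:ℝ) 1) (y : ℝ) : (∫ t in Iic y, k s t) = 0 := by
  have hz : ∀ t, k s t = 0 := fun t => hksupp s t (fun hm => hs hm.1)
  simp [hz]

lemma aux_K_nonneg (k : ℝ → ℝ → ℝ) (hkpos : ∀ s t : ℝ, 0 ≤ k s t) (x y : ℝ) :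
    0 ≤ ∫ s in Iic x, ∫ t in Iic y, k s t :=
  setIntegral_nonneg measurableSet_Iic fun s _ =>
    setIntegral_nonneg measurableSet_Iic fun t _ => hkpos s t

lemma aux_inner_le (k : ℝ → ℝ → ℝ)
    (hksupp : ∀ s t : ℝ, (s, t) ∉ Icc (-1:ℝ) 1 ×ˢ Icc (-1:ℝ) 1 → k s t = 0)
    (Mk : ℝ) (hMk : ∀ s t : ℝ, |k s t| ≤ Mk) (s y : ℝ) :
    (∫ t in Iic y, k s t) ≤ 2 * Mk := by
  have hMk0 : 0 ≤ Mk := le_trans (abs_nonneg _) (hMk 0 0)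
  have hfi : (fun t => k s t) = (Icc (-1:ℝ) 1).indicator (fun t => k s t) := by
    funext t
    by_cases ht : t ∈ Icc (-1:ℝ) 1
    · simp [ht]
    · simp [ht, hksupp s t (fun hm => ht hm.2)]
  calc (∫ t in Iic y, k s t) = ∫ t in Iic y, (Icc (-1:ℝ) 1).indicator (fun t => k s t) t := by
        rw [← hfi]
    _ = ∫ t in Iic y ∩ Icc (-1:ℝ) 1, k s t := setIntegral_indicator measurableSet_Icc
    _ ≤ |∫ t in Iic y ∩ Icc (-1:ℝ) 1, k s t| := le_abs_self _
    _ ≤ Mk * (volume (Iic y ∩ Icc (-1:ℝ) 1)).toReal := by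
        have := norm_setIntegral_le_of_norm_le_const
          (μ := volume) (s := Iic y ∩ Icc (-1:ℝ) 1) (f := fun t => k s t)
          (lt_of_le_of_lt (measure_mono inter_subset_right) (by simp))
          (fun t _ => by rw [Real.norm_eq_abs]; exact hMk s t)
        rwa [Real.norm_eq_abs, measureReal_def] at this
    _ ≤ Mk * 2 := by
        refine mul_le_mul_of_nonneg_left ?_ hMk0
        have h1 : (volume (Iic y ∩ Icc (-1:ℝ) 1)).toReal ≤ (volume (Icc (-1:ℝ) 1)).toReal := by
          apply ENNReal.toReal_mono (by simp) (measure_mono inter_subset_right)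
        simpa using h1.trans_eq (by rw [Real.volume_Icc]; norm_num)
    _ = 2 * Mk := mul_comm _ _

lemma aux_K_le (k : ℝ → ℝ → ℝ) (hkpos : ∀ s t : ℝ, 0 ≤ k s t)
    (hksupp : ∀ s t : ℝ, (s, t) ∉ Icc (-1:ℝ) 1 ×ˢ Icc (-1:ℝ) 1 → k s t = 0)
    (Mk : ℝ) (hMk : ∀ s t : ℝ, |k s t| ≤ Mk) (x y : ℝ) :
    (∫ s in Iic x, ∫ t in Iic y, k s t) ≤ 4 * Mk := by
  have hMk0 : 0 ≤ Mk := le_trans (abs_nonneg _) (hMk 0 0)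
  have hfi : (fun s => ∫ t in Iic y, k s t)
      = (Icc (-1:ℝ) 1).indicator (fun s => ∫ t in Iic y, k s t) := by
    funext s
    by_cases hs : s ∈ Icc (-1:ℝ) 1
    · simp [hs]
    · simp [hs, aux_inner_zero k hksupp hs y]
  calc (∫ s in Iic x, ∫ t in Iic y, k s t)
      = ∫ s in Iic x, (Icc (-1:ℝ) 1).indicator (fun s => ∫ t in Iic y, k s t) s := by rw [← hfi]
    _ = ∫ s in Iic x ∩ Icc (-1:ℝ) 1, ∫ t in Iic y, k s t :=
        setIntegral_indicator measurableSet_Icc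
    _ ≤ |∫ s in Iic x ∩ Icc (-1:ℝ) 1, ∫ t in Iic y, k s t| := le_abs_self _
    _ ≤ (2 * Mk) * (volume (Iic x ∩ Icc (-1:ℝ) 1)).toReal := by
        have := norm_setIntegral_le_of_norm_le_const
          (μ := volume) (s := Iic x ∩ Icc (-1:ℝ) 1) (f := fun s => ∫ t in Iic y, k s t)
          (lt_of_le_of_lt (measure_mono inter_subset_right) (by simp))
          (fun s _ => by
            rw [Real.norm_eq_abs, abs_of_nonneg
              (setIntegral_nonneg measurableSet_Iic fun t _ => hkpos s t)]
            exact aux_inner_le k hksupp Mk hMk s y)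
        rwa [Real.norm_eq_abs, measureReal_def] at this
    _ ≤ (2 * Mk) * 2 := by
        refine mul_le_mul_of_nonneg_left ?_ (by linarith)
        have h1 : (volume (Iic x ∩ Icc (-1:ℝ) 1)).toReal ≤ (volume (Icc (-1:ℝ) 1)).toReal := by
          apply ENNReal.toReal_mono (by simp) (measure_mono inter_subset_right)
        simpa using h1.trans_eq (by rw [Real.volume_Icc]; norm_num)
    _ = 4 * Mk := by ring

lemma aux_K_left (k : ℝ → ℝ → ℝ)
    (hksupp : ∀ s t : ℝ, (s, t) ∉ Icc (-1:ℝ) 1 ×ˢ Icc (-1:ℝ) 1 → k s t = 0)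
    {x : ℝ} (hx : x < -1) (y : ℝ) : (∫ s in Iic x, ∫ t in Iic y, k s t) = 0 := by
  have : ∀ s ∈ Iic x, (∫ t in Iic y, k s t) = (0:ℝ) := by
    intro s hs
    exact aux_inner_zero k hksupp (fun hm => absurd hm.1 (not_le.2 (lt_of_le_of_lt hs hx))) y
  rw [setIntegral_congr_fun measurableSet_Iic this, integral_zero]

lemma aux_K_bot (k : ℝ → ℝ → ℝ)
    (hksupp : ∀ s t : ℝ, (s, t) ∉ Icc (-1:ℝ) 1 ×ˢ Icc (-1:ℝ) 1 → k s t = 0)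
    (x : ℝ) {y : ℝ} (hy : y < -1) : (∫ s in Iic x, ∫ t in Iic y, k s t) = 0 := by
  have : ∀ s, (∫ t in Iic y, k s t) = (0:ℝ) := by
    intro s
    have hz : ∀ t ∈ Iic y, k s t = (0:ℝ) := fun t ht =>
      hksupp s t (fun hm => absurd hm.2.1 (not_le.2 (lt_of_le_of_lt ht hy)))
    rw [setIntegral_congr_fun measurableSet_Iic hz, integral_zero]
  simp [this]

lemma aux_K_one (k : ℝ → ℝ → ℝ)
    (hksupp : ∀ s t : ℝ, (s, t) ∉ Icc (-1:ℝ) 1 ×ˢ Icc (-1:ℝ) 1 → k s t = 0)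
    (hkint : (∫ s in Icc (-1:ℝ) 1, ∫ t in Icc (-1:ℝ) 1, k s t) = 1)
    {x y : ℝ} (hx : 1 ≤ x) (hy : 1 ≤ y) :
    (∫ s in Iic x, ∫ t in Iic y, k s t) = 1 := by
  have hinner : ∀ s, (∫ t in Iic y, k s t) = ∫ t in Icc (-1:ℝ) 1, k s t := by
    intro s
    have h1 : (∫ t in Iic y, k s t) = ∫ t, k s t :=
      setIntegral_eq_integral_of_forall_compl_eq_zero (fun t ht =>
        hksupp s t (fun hm => ht (le_trans hm.2.2 hy)))
    have h2 : (∫ t in Icc (-1:ℝ) 1, k s t) = ∫ t, k s t :=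
      setIntegral_eq_integral_of_forall_compl_eq_zero (fun t ht => hksupp s t (fun hm => ht hm.2))
    rw [h1, h2]
  have houter : (∫ s in Iic x, ∫ t in Icc (-1:ℝ) 1, k s t)
      = ∫ s in Icc (-1:ℝ) 1, ∫ t in Icc (-1:ℝ) 1, k s t := by
    have h1 : (∫ s in Iic x, ∫ t in Icc (-1:ℝ) 1, k s t) = ∫ s, ∫ t in Icc (-1:ℝ) 1, k s t := by
      refine setIntegral_eq_integral_of_forall_compl_eq_zero (fun s hs => ?_)
      have hz : ∀ t ∈ Icc (-1:ℝ) 1, k s t = (0:ℝ) := fun t _ =>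
        hksupp s t (fun hm => hs (le_trans hm.1.2 hx))
      rw [setIntegral_congr_fun measurableSet_Icc hz, integral_zero]
    have h2 : (∫ s in Icc (-1:ℝ) 1, ∫ t in Icc (-1:ℝ) 1, k s t)
        = ∫ s, ∫ t in Icc (-1:ℝ) 1, k s t := by
      refine setIntegral_eq_integral_of_forall_compl_eq_zero (fun s hs => ?_)
      have hz : ∀ t ∈ Icc (-1:ℝ) 1, k s t = (0:ℝ) := fun t _ =>
        hksupp s t (fun hm => hs hm.1)
      rw [setIntegral_congr_fun measurableSet_Icc hz, integral_zero]
    rw [h1, h2]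
  simp only [hinner]
  rw [houter, hkint]

/-- The second-moment bound (condition (G.ii)):
`E[(K((φ⁻¹(u) - φ⁻¹(U))/h, (φ⁻¹(v) - φ⁻¹(V))/h) - 1{U ≤ u, V ≤ v})²] ≤ C₀ h`. -/
theorem second_moment_bound
    {Ω : Type} [MeasurableSpace Ω] (P : Measure Ω) [IsProbabilityMeasure P]
    -- the copula `C`
    (Cop : ℝ → ℝ → ℝ)
    (hground : ∀ u ∈ Icc (0:ℝ) 1, Cop u 0 = 0 ∧ Cop 0 u = 0)
    (hmarg : ∀ u ∈ Icc (0:ℝ) 1, Cop u 1 = u ∧ Cop 1 u = u)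
    (h2inc : ∀ u₁ u₂ v₁ v₂ : ℝ, u₁ ∈ Icc (0:ℝ) 1 → u₂ ∈ Icc (0:ℝ) 1 → v₁ ∈ Icc (0:ℝ) 1 →
      v₂ ∈ Icc (0:ℝ) 1 → u₁ ≤ u₂ → v₁ ≤ v₂ →
      0 ≤ Cop u₂ v₂ - Cop u₁ v₂ - Cop u₂ v₁ + Cop u₁ v₁)
    -- bounded first-order partial derivatives of `C` on `(0,1)²`
    (Cu Cv : ℝ → ℝ → ℝ) (Mu Mv : ℝ)
    (hCu : ∀ u ∈ Ioo (0:ℝ) 1, ∀ v ∈ Ioo (0:ℝ) 1, HasDerivAt (fun u' => Cop u' v) (Cu u v) u)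
    (hCv : ∀ u ∈ Ioo (0:ℝ) 1, ∀ v ∈ Ioo (0:ℝ) 1, HasDerivAt (fun v' => Cop u v') (Cv u v) v)
    (hMu : ∀ u ∈ Ioo (0:ℝ) 1, ∀ v ∈ Ioo (0:ℝ) 1, |Cu u v| ≤ Mu)
    (hMv : ∀ u ∈ Ioo (0:ℝ) 1, ∀ v ∈ Ioo (0:ℝ) 1, |Cv u v| ≤ Mv)
    -- the increasing differentiable bijection `φ` with inverse `ψ = φ⁻¹` and bounded
    -- derivative `φ'`
    (φ ψ φ' : ℝ → ℝ) (hφm : StrictMonoOn φ (Icc (0:ℝ) 1))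
    (hφbij : BijOn φ (Icc (0:ℝ) 1) (Icc (0:ℝ) 1))
    (hψ : InvOn ψ φ (Icc (0:ℝ) 1) (Icc (0:ℝ) 1))
    (hφd : ∀ x ∈ Icc (0:ℝ) 1, HasDerivWithinAt φ (φ' x) (Icc (0:ℝ) 1) x)
    (Mφ : ℝ) (hMφ : ∀ x ∈ Icc (0:ℝ) 1, |φ' x| ≤ Mφ)
    -- the kernel `k`, nonnegative, bounded, supported on `[-1,1]²` and of integral 1,
    -- with `K(x,y) = ∫_{-∞}^x ∫_{-∞}^y k(s,t) ds dt`
    (k : ℝ → ℝ → ℝ) (hkpos : ∀ s t : ℝ, 0 ≤ k s t) (Mk : ℝ) (hMk : ∀ s t : ℝ, |k s t| ≤ Mk)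
    (hksupp : ∀ s t : ℝ, (s, t) ∉ Icc (-1:ℝ) 1 ×ˢ Icc (-1:ℝ) 1 → k s t = 0)
    (hkint : (∫ s in Icc (-1:ℝ) 1, ∫ t in Icc (-1:ℝ) 1, k s t) = 1)
    (K : ℝ → ℝ → ℝ) (hK : ∀ x y, K x y = ∫ s in Iic x, ∫ t in Iic y, k s t)
    -- the random vector `(U,V)` with joint distribution function `C`
    (U V : Ω → ℝ) (hUm : Measurable U) (hVm : Measurable V)
    (hUV : ∀ u ∈ Icc (0:ℝ) 1, ∀ v ∈ Icc (0:ℝ) 1,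
      (P {ω | U ω ≤ u ∧ V ω ≤ v}).toReal = Cop u v) :
    ∃ C₀ : ℝ, 0 < C₀ ∧
      ∀ u ∈ Ioo (0:ℝ) 1, ∀ v ∈ Ioo (0:ℝ) 1, ∀ h ∈ Ioo (0:ℝ) 1,
        (∀ s ∈ Icc (-1:ℝ) 1, ψ u - s * h ∈ Icc (0:ℝ) 1 ∧ ψ v - s * h ∈ Icc (0:ℝ) 1) →
        (∫ ω, (K ((ψ u - ψ (U ω)) / h) ((ψ v - ψ (V ω)) / h) -
            (if U ω ≤ u ∧ V ω ≤ v then (1:ℝ) else 0)) ^ 2 ∂P) ≤ C₀ * h := by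
  have hMk0 : 0 ≤ Mk := le_trans (abs_nonneg _) (hMk 0 0)
  have hMφ0 : 0 ≤ Mφ := le_trans (abs_nonneg _) (hMφ 0 ⟨le_refl _, zero_le_one⟩)
  have hmE : MeasurableSet {ω | U ω ≤ 1 ∧ V ω ≤ 1} :=
    (hUm measurableSet_Iic).inter (hVm measurableSet_Iic)
  have hE1 : P {ω | U ω ≤ 1 ∧ V ω ≤ 1} = 1 := by
    rw [← ENNReal.toReal_eq_one_iff]
    rw [hUV 1 ⟨zero_le_one, le_refl _⟩ 1 ⟨zero_le_one, le_refl _⟩]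
    exact (hmarg 1 ⟨zero_le_one, le_refl _⟩).1
  have hEc : P {ω | U ω ≤ 1 ∧ V ω ≤ 1}ᶜ = 0 := (prob_compl_eq_zero_iff hmE).2 hE1
  have hFU : ∀ x ∈ Icc (0:ℝ) 1, (P {ω | U ω ≤ x}).toReal = x := by
    intro x hx
    have heq : P {ω | U ω ≤ x} = P {ω | U ω ≤ x ∧ V ω ≤ 1} := by
      refine le_antisymm ?_ (measure_mono fun ω hω => hω.1)
      have hsub : {ω | U ω ≤ x} ⊆ {ω | U ω ≤ x ∧ V ω ≤ 1} ∪ {ω | U ω ≤ 1 ∧ V ω ≤ 1}ᶜ := by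
        intro ω hω
        by_cases hv : V ω ≤ 1
        · exact Or.inl ⟨hω, hv⟩
        · exact Or.inr (fun hc => hv hc.2)
      calc P {ω | U ω ≤ x} ≤ P ({ω | U ω ≤ x ∧ V ω ≤ 1} ∪ {ω | U ω ≤ 1 ∧ V ω ≤ 1}ᶜ) :=
            measure_mono hsub
        _ ≤ P {ω | U ω ≤ x ∧ V ω ≤ 1} + P {ω | U ω ≤ 1 ∧ V ω ≤ 1}ᶜ := measure_union_le _ _
        _ = P {ω | U ω ≤ x ∧ V ω ≤ 1} := by rw [hEc, add_zero]
    rw [heq, hUV x hx 1 ⟨zero_le_one, le_refl _⟩]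
    exact (hmarg x hx).1
  have hFV : ∀ x ∈ Icc (0:ℝ) 1, (P {ω | V ω ≤ x}).toReal = x := by
    intro x hx
    have heq : P {ω | V ω ≤ x} = P {ω | U ω ≤ 1 ∧ V ω ≤ x} := by
      refine le_antisymm ?_ (measure_mono fun ω hω => hω.2)
      have hsub : {ω | V ω ≤ x} ⊆ {ω | U ω ≤ 1 ∧ V ω ≤ x} ∪ {ω | U ω ≤ 1 ∧ V ω ≤ 1}ᶜ := by
        intro ω hω
        by_cases hv : U ω ≤ 1
        · exact Or.inl ⟨hv, hω⟩
        · exact Or.inr (fun hc => hv hc.1)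
      calc P {ω | V ω ≤ x} ≤ P ({ω | U ω ≤ 1 ∧ V ω ≤ x} ∪ {ω | U ω ≤ 1 ∧ V ω ≤ 1}ᶜ) :=
            measure_mono hsub
        _ ≤ P {ω | U ω ≤ 1 ∧ V ω ≤ x} + P {ω | U ω ≤ 1 ∧ V ω ≤ 1}ᶜ := measure_union_le _ _
        _ = P {ω | U ω ≤ 1 ∧ V ω ≤ x} := by rw [hEc, add_zero]
    rw [heq, hUV 1 ⟨zero_le_one, le_refl _⟩ x hx]
    exact (hmarg x hx).2
  have key : ∀ (W : Ω → ℝ), Measurable W → (∀ x ∈ Icc (0:ℝ) 1, (P {ω | W ω ≤ x}).toReal = x) →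
      ∀ a b : ℝ, 0 ≤ a → a ≤ b → b ≤ 1 → (P {ω | W ω ∈ Icc a b}).toReal ≤ b - a := by
    intro W hW hF a b ha hab hb1
    have hb0 : 0 ≤ b := ha.trans hab
    have hεbound : ∀ ε : ℝ, 0 < ε → (P {ω | W ω ∈ Icc a b}).toReal ≤ b - a + ε := by
      intro ε hε
      by_cases hc : a ≤ ε
      · have h1 : (P {ω | W ω ∈ Icc a b}).toReal ≤ (P {ω | W ω ≤ b}).toReal :=
          ENNReal.toReal_mono (measure_ne_top P _) (measure_mono fun ω hω => hω.2)
        rw [hF b ⟨hb0, hb1⟩] at h1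
        linarith
      · push_neg at hc
        have ha' : (0:ℝ) ≤ a - ε := by linarith
        have hd : Disjoint {ω | W ω ≤ a - ε} {ω | W ω ∈ Icc a b} := by
          rw [Set.disjoint_left]
          intro ω h1 h2
          have h3 := h2.1
          simp only [Set.mem_setOf_eq] at h1
          linarith
        have hu : P {ω | W ω ≤ a - ε} + P {ω | W ω ∈ Icc a b} ≤ P {ω | W ω ≤ b} := by
          rw [← measure_union hd (hW measurableSet_Icc)]
          refine measure_mono fun ω hω => ?_
          rcases hω with h1 | h2
          · simp only [Set.mem_setOf_eq] at h1 ⊢; linarith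
          · exact h2.2
        have hr : (P {ω | W ω ≤ a - ε}).toReal + (P {ω | W ω ∈ Icc a b}).toReal ≤
            (P {ω | W ω ≤ b}).toReal := by
          rw [← ENNReal.toReal_add (measure_ne_top P _) (measure_ne_top P _)]
          exact ENNReal.toReal_mono (measure_ne_top P _) hu
        rw [hF (a - ε) ⟨ha', by linarith⟩, hF b ⟨hb0, hb1⟩] at hr
        linarith
    by_contra hcon
    push_neg at hcon
    have := hεbound (((P {ω | W ω ∈ Icc a b}).toReal - (b - a)) / 2) (by linarith)
    linarith
  have hψmaps : MapsTo ψ (Icc (0:ℝ) 1) (Icc (0:ℝ) 1) := by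
    intro y hy
    obtain ⟨x, hx, rfl⟩ := hφbij.surjOn hy
    rw [hψ.1 hx]; exact hx
  have hψφ : ∀ y ∈ Icc (0:ℝ) 1, φ (ψ y) = y := fun y hy => hψ.2 hy
  have hψmono : ∀ p ∈ Icc (0:ℝ) 1, ∀ q ∈ Icc (0:ℝ) 1, p < q → ψ p < ψ q := by
    intro p hp q hq hpq
    by_contra hcon
    push_neg at hcon
    rcases eq_or_lt_of_le hcon with heq | hlt
    · rw [← hψφ p hp, ← hψφ q hq, heq] at hpq; exact lt_irrefl _ hpq
    · have := hφm (hψmaps hq) (hψmaps hp) hlt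
      rw [hψφ p hp, hψφ q hq] at this
      linarith
  refine ⟨(4 * Mk + 1) ^ 2 * (4 * Mφ) + 1, by positivity, ?_⟩
  intro u hu v hv h hh hbnd
  have hu' : u ∈ Icc (0:ℝ) 1 := ⟨hu.1.le, hu.2.le⟩
  have hv' : v ∈ Icc (0:ℝ) 1 := ⟨hv.1.le, hv.2.le⟩
  have hh0 : (0:ℝ) < h := hh.1
  have hpu1 : ψ u - h ∈ Icc (0:ℝ) 1 := by
    have := (hbnd 1 ⟨by norm_num, le_refl _⟩).1
    rwa [one_mul] at this
  have hpu2 : ψ u + h ∈ Icc (0:ℝ) 1 := by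
    have := (hbnd (-1) ⟨le_refl _, by norm_num⟩).1
    rwa [show ψ u - (-1) * h = ψ u + h by ring] at this
  have hpv1 : ψ v - h ∈ Icc (0:ℝ) 1 := by
    have := (hbnd 1 ⟨by norm_num, le_refl _⟩).2
    rwa [one_mul] at this
  have hpv2 : ψ v + h ∈ Icc (0:ℝ) 1 := by
    have := (hbnd (-1) ⟨le_refl _, by norm_num⟩).2
    rwa [show ψ v - (-1) * h = ψ v + h by ring] at this
  have hψu : ψ u ∈ Icc (0:ℝ) 1 := hψmaps hu'
  have hψv : ψ v ∈ Icc (0:ℝ) 1 := hψmaps hv'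
  set a₁ := φ (ψ u - h) with ha₁
  set b₁ := φ (ψ u + h) with hb₁
  set a₂ := φ (ψ v - h) with ha₂
  set b₂ := φ (ψ v + h) with hb₂
  have ha₁m : a₁ ∈ Icc (0:ℝ) 1 := hφbij.mapsTo hpu1
  have hb₁m : b₁ ∈ Icc (0:ℝ) 1 := hφbij.mapsTo hpu2
  have ha₂m : a₂ ∈ Icc (0:ℝ) 1 := hφbij.mapsTo hpv1
  have hb₂m : b₂ ∈ Icc (0:ℝ) 1 := hφbij.mapsTo hpv2
  have ha₁b₁ : a₁ ≤ b₁ := (hφm hpu1 hpu2 (by linarith)).le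
  have ha₂b₂ : a₂ ≤ b₂ := (hφm hpv1 hpv2 (by linarith)).le
  have ha₁u : a₁ < u := by
    have := hφm hpu1 hψu (by linarith)
    rwa [hψφ u hu'] at this
  have hub₁ : u < b₁ := by
    have := hφm hψu hpu2 (by linarith)
    rwa [hψφ u hu'] at this
  have ha₂v : a₂ < v := by
    have := hφm hpv1 hψv (by linarith)
    rwa [hψφ v hv'] at this
  have hvb₂ : v < b₂ := by
    have := hφm hψv hpv2 (by linarith)
    rwa [hψφ v hv'] at this
  have hψa₁ : ψ a₁ = ψ u - h := hψ.1 hpu1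
  have hψb₁ : ψ b₁ = ψ u + h := hψ.1 hpu2
  have hψa₂ : ψ a₂ = ψ v - h := hψ.1 hpv1
  have hψb₂ : ψ b₂ = ψ v + h := hψ.1 hpv2
  have hmvt : ∀ p ∈ Icc (0:ℝ) 1, ∀ q ∈ Icc (0:ℝ) 1, φ q - φ p ≤ Mφ * |q - p| := by
    intro p hp q hq
    have := Convex.norm_image_sub_le_of_norm_hasDerivWithin_le hφd
      (fun x hx => by rw [Real.norm_eq_abs]; exact hMφ x hx) (convex_Icc 0 1) hp hq
    rw [Real.norm_eq_abs, Real.norm_eq_abs] at this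
    exact le_trans (le_abs_self _) this
  have hb₁a₁ : b₁ - a₁ ≤ 2 * Mφ * h := by
    have := hmvt (ψ u - h) hpu1 (ψ u + h) hpu2
    rw [show ψ u + h - (ψ u - h) = 2 * h by ring, abs_of_pos (by linarith)] at this
    calc b₁ - a₁ ≤ Mφ * (2 * h) := this
      _ = 2 * Mφ * h := by ring
  have hb₂a₂ : b₂ - a₂ ≤ 2 * Mφ * h := by
    have := hmvt (ψ v - h) hpv1 (ψ v + h) hpv2
    rw [show ψ v + h - (ψ v - h) = 2 * h by ring, abs_of_pos (by linarith)] at this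
    calc b₂ - a₂ ≤ Mφ * (2 * h) := this
      _ = 2 * Mφ * h := by ring
  set A : Set Ω := {ω | U ω ∈ Icc a₁ b₁} ∪ {ω | V ω ∈ Icc a₂ b₂} with hAdef
  have hAm : MeasurableSet A := (hUm measurableSet_Icc).union (hVm measurableSet_Icc)
  have hPA : (P A).toReal ≤ 4 * Mφ * h := by
    have h1 : (P A).toReal ≤ (P {ω | U ω ∈ Icc a₁ b₁}).toReal +
        (P {ω | V ω ∈ Icc a₂ b₂}).toReal := by
      rw [← ENNReal.toReal_add (measure_ne_top P _) (measure_ne_top P _)]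
      exact ENNReal.toReal_mono
        (ENNReal.add_ne_top.2 ⟨measure_ne_top P _, measure_ne_top P _⟩)
        (measure_union_le _ _)
    have h2 := key U hUm hFU a₁ b₁ ha₁m.1 ha₁b₁ hb₁m.2
    have h3 := key V hVm hFV a₂ b₂ ha₂m.1 ha₂b₂ hb₂m.2
    linarith
  have hU0 : P {ω | U ω ≤ 0} = 0 := by
    have h0 := hFU 0 ⟨le_refl _, zero_le_one⟩
    rw [ENNReal.toReal_eq_zero_iff] at h0
    exact h0.resolve_right (measure_ne_top P _)
  have hV0 : P {ω | V ω ≤ 0} = 0 := by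
    have h0 := hFV 0 ⟨le_refl _, zero_le_one⟩
    rw [ENNReal.toReal_eq_zero_iff] at h0
    exact h0.resolve_right (measure_ne_top P _)
  have hS : ∀ᵐ ω ∂P, (U ω ∈ Icc (0:ℝ) 1) ∧ (V ω ∈ Icc (0:ℝ) 1) := by
    rw [ae_iff]
    refine measure_mono_null (fun ω hω => ?_)
      (measure_union_null (measure_union_null hU0 hV0) hEc)
    simp only [Set.mem_setOf_eq, Set.mem_union, Set.mem_compl_iff, Set.mem_Icc] at hω ⊢
    by_cases h1 : U ω ≤ 1
    · by_cases h2 : V ω ≤ 1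
      · by_cases h3 : 0 ≤ U ω
        · by_cases h4 : 0 ≤ V ω
          · exact absurd ⟨⟨h3, h1⟩, ⟨h4, h2⟩⟩ hω
          · exact Or.inl (Or.inr (le_of_not_ge h4))
        · exact Or.inl (Or.inl (le_of_not_ge h3))
      · exact Or.inr (fun hc => h2 hc.2)
    · exact Or.inr (fun hc => h1 hc.1)
  by_cases hg : Integrable (fun ω => (K ((ψ u - ψ (U ω)) / h) ((ψ v - ψ (V ω)) / h) -
      (if U ω ≤ u ∧ V ω ≤ v then (1:ℝ) else 0)) ^ 2) P
  · have hbound : (fun ω => (K ((ψ u - ψ (U ω)) / h) ((ψ v - ψ (V ω)) / h) -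
        (if U ω ≤ u ∧ V ω ≤ v then (1:ℝ) else 0)) ^ 2)
        ≤ᵐ[P] fun ω => A.indicator (fun _ => ((4 * Mk + 1) ^ 2 : ℝ)) ω := by
      filter_upwards [hS] with ω hω
      by_cases hAω : ω ∈ A
      · rw [Set.indicator_of_mem hAω]
        have h0 : 0 ≤ K ((ψ u - ψ (U ω)) / h) ((ψ v - ψ (V ω)) / h) := by
          rw [hK]; exact aux_K_nonneg k hkpos _ _
        have h4 : K ((ψ u - ψ (U ω)) / h) ((ψ v - ψ (V ω)) / h) ≤ 4 * Mk := by
          rw [hK]; exact aux_K_le k hkpos hksupp Mk hMk _ _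
        have hI0 : (0:ℝ) ≤ (if U ω ≤ u ∧ V ω ≤ v then (1:ℝ) else 0) := by
          split_ifs <;> norm_num
        have hI1 : (if U ω ≤ u ∧ V ω ≤ v then (1:ℝ) else 0) ≤ 1 := by
          split_ifs <;> norm_num
        exact sq_le_sq' (by linarith) (by linarith)
      · rw [Set.indicator_of_notMem hAω]
        simp only [hAdef, Set.mem_union, Set.mem_setOf_eq, Set.mem_Icc] at hAω
        push_neg at hAω
        obtain ⟨hA1, hA2⟩ := hAω
        rcases lt_or_ge (U ω) a₁ with hU1 | hU1
        · rcases lt_or_ge (V ω) a₂ with hV1 | hV1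
          · have hx1 : (1:ℝ) ≤ (ψ u - ψ (U ω)) / h := by
              rw [le_div_iff₀ hh0]
              have hm := hψmono (U ω) hω.1 a₁ ha₁m hU1
              rw [hψa₁] at hm; linarith
            have hy1 : (1:ℝ) ≤ (ψ v - ψ (V ω)) / h := by
              rw [le_div_iff₀ hh0]
              have hm := hψmono (V ω) hω.2 a₂ ha₂m hV1
              rw [hψa₂] at hm; linarith
            rw [hK, aux_K_one k hksupp hkint hx1 hy1,
              if_pos ⟨(hU1.trans ha₁u).le, (hV1.trans ha₂v).le⟩]
            norm_num
          · have hV2 : b₂ < V ω := hA2 hV1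
            have hy : (ψ v - ψ (V ω)) / h < -1 := by
              rw [div_lt_iff₀ hh0]
              have hm := hψmono b₂ hb₂m (V ω) hω.2 hV2
              rw [hψb₂] at hm; linarith
            rw [hK, aux_K_bot k hksupp _ hy,
              if_neg (fun hc => absurd hc.2 (not_le.2 (hvb₂.trans hV2)))]
            norm_num
        · have hU2 : b₁ < U ω := hA1 hU1
          have hx : (ψ u - ψ (U ω)) / h < -1 := by
            rw [div_lt_iff₀ hh0]
            have hm := hψmono b₁ hb₁m (U ω) hω.1 hU2
            rw [hψb₁] at hm; linarith
          rw [hK, aux_K_left k hksupp hx,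
            if_neg (fun hc => absurd hc.1 (not_le.2 (hub₁.trans hU2)))]
          norm_num
    have hindint : Integrable (fun ω => A.indicator (fun _ => ((4 * Mk + 1) ^ 2 : ℝ)) ω) P :=
      (integrable_const _).indicator hAm
    calc (∫ ω, (K ((ψ u - ψ (U ω)) / h) ((ψ v - ψ (V ω)) / h) -
            (if U ω ≤ u ∧ V ω ≤ v then (1:ℝ) else 0)) ^ 2 ∂P)
        ≤ ∫ ω, A.indicator (fun _ => ((4 * Mk + 1) ^ 2 : ℝ)) ω ∂P :=
          integral_mono_ae hg hindint hbound
      _ = (P A).toReal * (4 * Mk + 1) ^ 2 := by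
          rw [integral_indicator_const _ hAm, smul_eq_mul, measureReal_def]
      _ ≤ (4 * Mφ * h) * (4 * Mk + 1) ^ 2 :=
          mul_le_mul_of_nonneg_right hPA (sq_nonneg _)
      _ ≤ ((4 * Mk + 1) ^ 2 * (4 * Mφ) + 1) * h := by nlinarith [hh0.le]
  · rw [integral_undef hg]
    have hC0 : (0:ℝ) ≤ (4 * Mk + 1) ^ 2 * (4 * Mφ) + 1 := by positivity
    exact mul_nonneg hC0 hh0.le
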